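/- For every integer m ≥ 3, setting M = 2^m − 1, there exists a set A ⊆ ℝ with |A| = M such that A is an almost-Sidon set and C(A) ≤ 2m + 1. In particular, there exist almost-Sidon sets of size M whose complexity is O(log₂ M), far below the highest possible complexity M−1. -/

import Mathlib

/-- The (additive) complexity of a set `A` of reals: the smallest positive integer `θ`
for which there exist reals `x 1, ..., x θ, y 1, ..., y θ` with
`A ⊆ {x 1, y 1} + ... + {x θ, y θ}` (Minkowski sumset). -/
noncomputable def complexity (A : Set ℝ) : ℕ :=
  sInf {θ : ℕ | 0 < θ ∧ ∃ x y : Fin θ → ℝ,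
    A ⊆ {t : ℝ | ∃ z : Fin θ → ℝ, (∀ i, z i = x i ∨ z i = y i) ∧ t = ∑ i, z i}}

/-- Base-4 digit expansions are unique (digits below 4). -/
lemma digit_unique : ∀ {n : ℕ} (f g : Fin n → ℕ), (∀ i, f i < 4) → (∀ i, g i < 4) →
    (∑ i, f i * 4 ^ (i : ℕ)) = (∑ i, g i * 4 ^ (i : ℕ)) → f = g := by
  intro n
  induction n with
  | zero => intro f g _ _ _; funext i; exact i.elim0
  | succ n ih =>
    intro f g hf hg h
    rw [Fin.sum_univ_succ, Fin.sum_univ_succ] at h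
    have e : ∀ (f : Fin (n+1) → ℕ),
        (∑ i : Fin n, f i.succ * 4 ^ ((i.succ : Fin (n+1)) : ℕ))
        = (∑ i : Fin n, f i.succ * 4 ^ (i : ℕ)) * 4 := by
      intro f
      rw [Finset.sum_mul]
      refine Finset.sum_congr rfl fun i _ => ?_
      rw [Fin.val_succ, pow_succ]; ring
    rw [e f, e g] at h
    simp only [Fin.val_zero, pow_zero, mul_one] at h
    have hf0 := hf 0; have hg0 := hg 0
    have h1 : f 0 = g 0 := by omega
    have h2 : (∑ i : Fin n, f i.succ * 4 ^ (i : ℕ)) = ∑ i : Fin n, g i.succ * 4 ^ (i : ℕ) := by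
      omega
    have ht := ih (fun i => f i.succ) (fun i => g i.succ) (fun i => hf _) (fun i => hg _) h2
    funext i
    cases i using Fin.cases with
    | zero => exact h1
    | succ j => exact congrFun ht j

/-- In a field of characteristic 2, the map `x ↦ (x, x³)` is a Sidon map:
sums of pairs determine the pair. -/
lemma sidon_field {F : Type*} [Field F] (h2 : (2 : F) = 0) {x y x' y' : F}
    (hs : x + y = x' + y') (hc : x ^ 3 + y ^ 3 = x' ^ 3 + y' ^ 3) (hxy : x ≠ y) :
    x = x' ∨ x = y' := by
  have hy' : y' = x + y - x' := by linear_combination -hs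
  subst hy'
  have hs0 : x + y ≠ 0 := fun h => hxy (by linear_combination h - y * h2)
  have key : (x + y) * (x * y - x' * (x + y - x')) = 0 := by
    linear_combination -hc - ((x+y) * (x*y - x'*(x+y-x'))) * h2
  have key2 : x * y - x' * (x + y - x') = 0 := by
    rcases mul_eq_zero.1 key with h | h
    · exact absurd h hs0
    · exact h
  have key3 : (x - x') * (x - (x + y - x')) = 0 := by linear_combination -key2
  rcases mul_eq_zero.1 key3 with h | h
  · exact Or.inl (by linear_combination h)
  · exact Or.inr (by linear_combination h)

section Construction

variable {F : Type*} [Field F] [Module (ZMod 2) F] {m : ℕ}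

/-- The `2m+1` natural-number digits (all `0` or `1`) encoding the pair `(w, w³)`
in coordinates with respect to a basis of `F` over `𝔽₂`. -/
noncomputable def coordsN (b : Module.Basis (Fin m) (ZMod 2) F) (w : F) (i : Fin (2 * m + 1)) : ℕ :=
  if h : (i : ℕ) < m then (b.repr w ⟨i, h⟩).val
  else if h' : (i : ℕ) < 2 * m then (b.repr (w ^ 3) ⟨(i : ℕ) - m, by omega⟩).val
  else 0

lemma coordsN_le (b : Module.Basis (Fin m) (ZMod 2) F) (w : F) (i : Fin (2 * m + 1)) :
    coordsN b w i ≤ 1 := by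
  unfold coordsN
  split_ifs with h h'
  · exact Nat.lt_succ_iff.mp (ZMod.val_lt _)
  · exact Nat.lt_succ_iff.mp (ZMod.val_lt _)
  · exact zero_le_one

lemma coordsN_fst (b : Module.Basis (Fin m) (ZMod 2) F) (w : F) (j : Fin m) :
    coordsN b w ⟨j, by omega⟩ = (b.repr w j).val := by
  simp [coordsN, j.isLt]

lemma coordsN_snd (b : Module.Basis (Fin m) (ZMod 2) F) (w : F) (j : Fin m) :
    coordsN b w ⟨m + j, by omega⟩ = (b.repr (w ^ 3) j).val := by
  have hj := j.isLt
  simp only [coordsN, Fin.val_mk]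
  rw [dif_neg (by omega), dif_pos (by omega)]
  have hidx : (⟨m + (j : ℕ) - m, by omega⟩ : Fin m) = j :=
    Fin.ext (by simp only [Fin.val_mk]; omega)
  rw [hidx]

/-- The real-number embedding of `(w, w³)` via base-4 digits. -/
noncomputable def emb (b : Module.Basis (Fin m) (ZMod 2) F) (w : F) : ℝ :=
  ((∑ i, coordsN b w i * 4 ^ (i : ℕ) : ℕ) : ℝ)

lemma zmod2_val_inj {a c : ZMod 2} (h : a.val = c.val) : a = c := by
  have := congrArg (Nat.cast (R := ZMod 2)) h
  simpa [ZMod.natCast_val, ZMod.cast_id] using this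

lemma emb_inj (b : Module.Basis (Fin m) (ZMod 2) F) : Function.Injective (emb b) := by
  intro u v h
  have hn : (∑ i, coordsN b u i * 4 ^ (i : ℕ)) = ∑ i, coordsN b v i * 4 ^ (i : ℕ) := by
    unfold emb at h; exact_mod_cast h
  have hd := digit_unique (coordsN b u) (coordsN b v)
    (fun i => lt_of_le_of_lt (coordsN_le b u i) (by norm_num))
    (fun i => lt_of_le_of_lt (coordsN_le b v i) (by norm_num)) hn
  refine b.ext_elem fun j => ?_
  have h1 := congrFun hd ⟨j, by omega⟩
  rw [coordsN_fst, coordsN_fst] at h1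
  exact zmod2_val_inj h1

lemma emb_sum_eq (b : Module.Basis (Fin m) (ZMod 2) F) {u v u' v' : F}
    (h : emb b u + emb b v = emb b u' + emb b v') :
    u + v = u' + v' ∧ u ^ 3 + v ^ 3 = u' ^ 3 + v' ^ 3 := by
  have hn : (∑ i, coordsN b u i * 4 ^ (i : ℕ)) + (∑ i, coordsN b v i * 4 ^ (i : ℕ))
      = (∑ i, coordsN b u' i * 4 ^ (i : ℕ)) + (∑ i, coordsN b v' i * 4 ^ (i : ℕ)) := by
    unfold emb at h; exact_mod_cast h
  rw [← Finset.sum_add_distrib, ← Finset.sum_add_distrib] at hn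
  have hn' : (∑ i, (coordsN b u i + coordsN b v i) * 4 ^ (i : ℕ))
      = ∑ i, (coordsN b u' i + coordsN b v' i) * 4 ^ (i : ℕ) := by
    simpa [add_mul] using hn
  have hd := digit_unique (fun i => coordsN b u i + coordsN b v i)
    (fun i => coordsN b u' i + coordsN b v' i)
    (fun i => by show coordsN b u i + coordsN b v i < 4
                 have := coordsN_le b u i; have := coordsN_le b v i; omega)
    (fun i => by show coordsN b u' i + coordsN b v' i < 4
                 have := coordsN_le b u' i; have := coordsN_le b v' i; omega) hn'
  constructor
  · refine b.ext_elem fun j => ?_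
    have h1 := congrFun hd ⟨j, by omega⟩
    simp only [coordsN_fst] at h1
    have h2 := congrArg (Nat.cast (R := ZMod 2)) h1
    push_cast at h2
    simpa [ZMod.natCast_val, ZMod.cast_id, map_add] using h2
  · refine b.ext_elem fun j => ?_
    have h1 := congrFun hd ⟨m + j, by omega⟩
    simp only [coordsN_snd] at h1
    have h2 := congrArg (Nat.cast (R := ZMod 2)) h1
    push_cast at h2
    simpa [ZMod.natCast_val, ZMod.cast_id, map_add] using h2

end Construction

/-- For every `m ≥ 3` there exists an almost-Sidon set of size `2^m - 1` with complexity
at most `2m + 1`. -/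
theorem stmt_17 (m : ℕ) (hm : 3 ≤ m) :
    ∃ A : Finset ℝ, A.card = 2 ^ m - 1 ∧
      (∀ a₁ a₂ b₁ b₂ : ℝ, a₁ ∈ A → a₂ ∈ A → b₁ ∈ A → b₂ ∈ A →
        a₁ ≠ a₂ → a₁ ≠ b₁ → a₁ ≠ b₂ → a₂ ≠ b₁ → a₂ ≠ b₂ → b₁ ≠ b₂ →
        a₁ + b₁ ≠ a₂ + b₂) ∧
      complexity ↑A ≤ 2 * m + 1 := by
  classical
  set F := GaloisField 2 m with hF
  haveI : Fintype F := Fintype.ofFinite _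
  have h2 : (2 : F) = 0 := by
    have := CharP.cast_eq_zero F 2
    exact_mod_cast this
  have hcard : Fintype.card F = 2 ^ m := by
    have h := GaloisField.card 2 m (by omega : m ≠ 0)
    rwa [Nat.card_eq_fintype_card] at h
  have hd : Module.finrank (ZMod 2) F = m := by
    have h2' := Module.card_eq_pow_finrank (K := ZMod 2) (V := F)
    rw [ZMod.card] at h2'
    exact Nat.pow_right_injective (le_refl 2) (h2'.symm.trans hcard)
  let b : Module.Basis (Fin m) (ZMod 2) F := (Module.finBasis _ _).reindex (finCongr hd)
  refine ⟨(Finset.univ.erase (0 : F)).image (emb b), ?_, ?_, ?_⟩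
  · rw [Finset.card_image_of_injective _ (emb_inj b),
      Finset.card_erase_of_mem (Finset.mem_univ _), Finset.card_univ, hcard]
  · intro a₁ a₂ b₁ b₂ ha₁ ha₂ hb₁ hb₂ h12 h1b1 h1b2 h2b1 h2b2 hb12 hsum
    obtain ⟨u, -, rfl⟩ := Finset.mem_image.1 ha₁
    obtain ⟨u', -, rfl⟩ := Finset.mem_image.1 ha₂
    obtain ⟨v, -, rfl⟩ := Finset.mem_image.1 hb₁
    obtain ⟨v', -, rfl⟩ := Finset.mem_image.1 hb₂
    obtain ⟨hs, hc⟩ := emb_sum_eq b hsum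
    have huv : u ≠ v := fun h => h1b1 (by rw [h])
    rcases sidon_field h2 hs hc huv with h | h
    · exact h12 (by rw [h])
    · exact h1b2 (by rw [h])
  · apply Nat.sInf_le
    refine ⟨by omega, fun _ => 0, fun i => (4 : ℝ) ^ (i : ℕ), ?_⟩
    intro t ht
    simp only [Finset.coe_image, Set.mem_image, Finset.mem_coe] at ht
    obtain ⟨w, -, rfl⟩ := ht
    refine ⟨fun i => (coordsN b w i : ℝ) * 4 ^ (i : ℕ), fun i => ?_, ?_⟩
    · have := coordsN_le b w i
      interval_cases h : coordsN b w i
      · left; simp [h]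
      · right; simp [h]
    · unfold emb
      push_cast
      rfl
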